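/- For every n ∈ ℤ and every integer k ≥ 0, the following operator identity holds on K: (1 − q)·t·𝓜_{n+2k+1,n} = Σ_{ℓ=0}^{k} ( 𝓜_{n+2ℓ} ∘ 𝓜_{n+2k−2ℓ+1} − q·𝓜_{n+2k−2ℓ+1} ∘ 𝓜_{n+2ℓ} ), i.e. (1−q)·t·𝓜_{n+2k+1,n} = Σ_{ℓ=0}^k [𝓜_{n+2ℓ}, 𝓜_{n+2k−2ℓ+1}]_q where [X,Y]_q = X∘Y − q·Y∘X. -/

import Mathlib

open scoped BigOperators

noncomputable section

/-- The field `F(x₁,…,x_N)` of rational functions in `N` variables over `F`. -/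
abbrev RatF (F : Type) [Field F] (N : ℕ) : Type :=
  FractionRing (MvPolynomial (Fin N) F)

/-- The variable `xᵢ` viewed inside the rational function field. -/
noncomputable def Xv (F : Type) [Field F] (N : ℕ) (i : Fin N) : RatF F N :=
  algebraMap (MvPolynomial (Fin N) F) (RatF F N) (MvPolynomial.X i)

/-- The generalized Macdonald operator `𝓜ₙ`:
`𝓜ₙ f = Σᵢ xᵢⁿ · (Πⱼ≠ᵢ (t·xᵢ − xⱼ)/(xᵢ − xⱼ)) · Γᵢ(f)`. -/
noncomputable def Mac (F : Type) [Field F] (N : ℕ) (t : F)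
    (Γ : Fin N → (RatF F N ≃ₐ[F] RatF F N)) (n : ℤ) (f : RatF F N) : RatF F N :=
  ∑ i : Fin N, Xv F N i ^ n *
    (∏ j ∈ Finset.univ.erase i, (t • Xv F N i - Xv F N j) / (Xv F N i - Xv F N j)) *
    Γ i f

/-- The operator `𝓜_{a,b}` built from the generalized Schur function
`s_{a,b}(x,y) = (x^{a+1}y^b − y^{a+1}x^b)/(x−y)`:
`𝓜_{a,b} f = Σ_{i<j} s_{a,b}(xᵢ,xⱼ) · Π_{k∉{i,j}} ((t xᵢ−xₖ)(t xⱼ−xₖ))/((xᵢ−xₖ)(xⱼ−xₖ)) · ΓᵢΓⱼ f`. -/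
noncomputable def MacPair (F : Type) [Field F] (N : ℕ) (t : F)
    (Γ : Fin N → (RatF F N ≃ₐ[F] RatF F N)) (a b : ℤ) (f : RatF F N) : RatF F N :=
  ∑ i : Fin N, ∑ j ∈ Finset.univ.filter (fun j : Fin N => i < j),
    ((Xv F N i ^ (a + 1) * Xv F N j ^ b - Xv F N j ^ (a + 1) * Xv F N i ^ b) /
        (Xv F N i - Xv F N j)) *
      (∏ k ∈ (Finset.univ.erase i).erase j,
        ((t • Xv F N i - Xv F N k) * (t • Xv F N j - Xv F N k)) /
          ((Xv F N i - Xv F N k) * (Xv F N j - Xv F N k))) *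
      Γ i (Γ j f)

lemma Gamma_smul (F : Type) [Field F] (N : ℕ) (Γ : Fin N → (RatF F N ≃ₐ[F] RatF F N))
    (i : Fin N) (c : F) (z : RatF F N) : Γ i (c • z) = c • Γ i z := by
  rw [Algebra.smul_def, map_mul, AlgEquiv.commutes, Algebra.smul_def]

/-- coefficient of Mac -/
noncomputable def MacC (F : Type) [Field F] (N : ℕ) (t : F) (m : ℤ) (i : Fin N) : RatF F N :=
  Xv F N i ^ m * ∏ j ∈ Finset.univ.erase i, (t • Xv F N i - Xv F N j) / (Xv F N i - Xv F N j)

variable {F : Type} [Field F] {N : ℕ} {q t : F} {Γ : Fin N → (RatF F N ≃ₐ[F] RatF F N)}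

lemma Gamma_zpow (i : Fin N) (z : RatF F N) (m : ℤ) : Γ i (z ^ m) = (Γ i z) ^ m :=
  map_zpow₀ (Γ i : RatF F N →+* RatF F N) z m

lemma Gamma_coeff_ne
    (hΓ : ∀ i j : Fin N, Γ i (Xv F N j) = if j = i then q • Xv F N j else Xv F N j)
    (i j : Fin N) (hij : i ≠ j) (m : ℤ) :
    Γ i (MacC F N t m j)
      = Xv F N j ^ m * ((t • Xv F N j - q • Xv F N i) / (Xv F N j - q • Xv F N i))
        * ∏ l ∈ (Finset.univ.erase j).erase i,
            (t • Xv F N j - Xv F N l) / (Xv F N j - Xv F N l) := by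
  rw [MacC, map_mul, Gamma_zpow, hΓ, if_neg (Ne.symm hij), mul_assoc]
  congr 1
  rw [map_prod]
  have hmem : i ∈ Finset.univ.erase j := Finset.mem_erase.mpr ⟨hij, Finset.mem_univ i⟩
  rw [← Finset.mul_prod_erase _ _ hmem]
  congr 1
  · rw [map_div₀, map_sub, map_sub, Gamma_smul, hΓ i j, if_neg (Ne.symm hij), hΓ i i, if_pos rfl]
  · apply Finset.prod_congr rfl
    intro l hl
    have hli : l ≠ i := (Finset.mem_erase.mp hl).1
    have hlj : l ≠ j := (Finset.mem_erase.mp (Finset.mem_erase.mp hl).2).1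
    rw [map_div₀, map_sub, map_sub, Gamma_smul, hΓ i j, if_neg (Ne.symm hij), hΓ i l, if_neg hli]

lemma smul_zpow'' (c : F) (z : RatF F N) (m : ℤ) : (c • z) ^ m = c ^ m • z ^ m := by
  rw [Algebra.smul_def, mul_zpow, ← map_zpow₀, ← Algebra.smul_def]

lemma Gamma_coeff_eq
    (hΓ : ∀ i j : Fin N, Γ i (Xv F N j) = if j = i then q • Xv F N j else Xv F N j)
    (i : Fin N) (m : ℤ) :
    Γ i (MacC F N t m i)
      = q ^ m • (Xv F N i ^ m *
          Γ i (∏ l ∈ Finset.univ.erase i, (t • Xv F N i - Xv F N l) / (Xv F N i - Xv F N l))) := by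
  rw [MacC, map_mul, Gamma_zpow, hΓ, if_pos rfl, smul_zpow'', smul_mul_assoc]

lemma Xv_sub_smul_ne (F : Type) [Field F] (N : ℕ) (c : F) (i j : Fin N) (hij : i ≠ j) :
    Xv F N i - c • Xv F N j ≠ 0 := by
  have h1 : Xv F N i - c • Xv F N j
      = algebraMap (MvPolynomial (Fin N) F) (RatF F N)
          (MvPolynomial.X i - MvPolynomial.C c * MvPolynomial.X j) := by
    rw [map_sub, map_mul, Algebra.smul_def, Xv, Xv,
      IsScalarTower.algebraMap_apply F (MvPolynomial (Fin N) F) (RatF F N),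
      MvPolynomial.algebraMap_eq]
  rw [h1,
    map_ne_zero_iff _ (IsFractionRing.injective (MvPolynomial (Fin N) F) (RatF F N))]
  intro h0
  have := congrArg (MvPolynomial.eval (fun l => if l = i then (1:F) else 0)) h0
  simp [hij.symm] at this

lemma Xv_ne_zero (F : Type) [Field F] (N : ℕ) (i : Fin N) : Xv F N i ≠ 0 := by
  rw [Xv, map_ne_zero_iff _ (IsFractionRing.injective (MvPolynomial (Fin N) F) (RatF F N))]
  exact MvPolynomial.X_ne_zero i

lemma Xv_sub_ne (F : Type) [Field F] (N : ℕ) (i j : Fin N) (hij : i ≠ j) :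
    Xv F N i - Xv F N j ≠ 0 := by
  have := Xv_sub_smul_ne F N 1 i j hij
  simpa using this

lemma reflectE {K : Type*} [CommRing K] (x y : K) (k : ℕ) :
    ∑ l ∈ Finset.range (k+1), (x^2)^(k-l) * (y^2)^l
      = ∑ l ∈ Finset.range (k+1), (x^2)^l * (y^2)^(k-l) := by
  rw [← Finset.sum_range_reflect]
  apply Finset.sum_congr rfl
  intro l hl
  have hlk : l ≤ k := Nat.lt_succ_iff.mp (Finset.mem_range.mp hl)
  simp only [Nat.add_sub_cancel]
  rw [Nat.sub_sub_self hlk]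

lemma qsum {K : Type*} [Field K] (Q : K) (n : ℤ) (k : ℕ) :
    ∑ l ∈ Finset.range (k+1), (Q^(n + 2*(k:ℤ) - 2*l + 1) - Q^(n + 2*(l:ℤ) + 1)) = 0 := by
  rw [Finset.sum_sub_distrib, sub_eq_zero, ← Finset.sum_range_reflect]
  apply Finset.sum_congr rfl
  intro l hl
  have hlk : l ≤ k := Nat.lt_succ_iff.mp (Finset.mem_range.mp hl)
  simp only [Nat.add_sub_cancel]
  congr 1
  push_cast [Nat.cast_sub hlk]
  ring

lemma zpow_split {K : Type*} [Field K] (x : K) (hx : x ≠ 0) (n : ℤ) (c : ℕ) :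
    x ^ (n + 2*(c:ℤ)) = x ^ n * (x^2)^c := by
  rw [zpow_add₀ hx]
  congr 1
  rw [show (2*(c:ℤ)) = ((2*c : ℕ) : ℤ) by push_cast; ring, zpow_natCast, pow_mul]

lemma sumPow {K : Type*} [Field K] (x y : K) (hx : x ≠ 0) (hy : y ≠ 0) (Q : K) (n : ℤ) (k : ℕ) :
    ∑ l ∈ Finset.range (k+1),
        (x^(n + 2*(l:ℤ)) * y^(n + 2*(k:ℤ) - 2*l + 1)
          - Q * (x^(n + 2*(k:ℤ) - 2*l + 1) * y^(n + 2*(l:ℤ))))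
      = x^n * y^n * ((y - Q*x) * ∑ l ∈ Finset.range (k+1), (x^2)^l * (y^2)^(k-l)) := by
  have key : ∀ l ∈ Finset.range (k+1),
      x^(n + 2*(l:ℤ)) * y^(n + 2*(k:ℤ) - 2*l + 1)
          - Q * (x^(n + 2*(k:ℤ) - 2*l + 1) * y^(n + 2*(l:ℤ)))
        = x^n * y^n * (y * ((x^2)^l * (y^2)^(k-l)) - Q * x * ((x^2)^(k-l) * (y^2)^l)) := by
    intro l hl
    have hlk : l ≤ k := Nat.lt_succ_iff.mp (Finset.mem_range.mp hl)
    have e1 : n + 2*(k:ℤ) - 2*l + 1 = (n + 1) + 2*((k - l : ℕ) : ℤ) := by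
      push_cast [Nat.cast_sub hlk]; ring
    rw [e1, zpow_split x hx n l, zpow_split y hy (n+1) (k-l), zpow_split x hx (n+1) (k-l),
      zpow_split y hy n l, zpow_add₀ hx, zpow_add₀ hy, zpow_one, zpow_one]
    ring
  rw [Finset.sum_congr rfl key, ← Finset.mul_sum, Finset.sum_sub_distrib]
  congr 1
  rw [← Finset.mul_sum, ← Finset.mul_sum, reflectE, sub_mul]

set_option maxHeartbeats 1600000 in
lemma pair_core
    (hΓ : ∀ i j : Fin N, Γ i (Xv F N j) = if j = i then q • Xv F N j else Xv F N j)
    (n : ℤ) (k : ℕ) (i j : Fin N) (hij : i ≠ j) :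
    ∑ l ∈ Finset.range (k+1),
        ((MacC F N t (n + 2*(l:ℤ)) i * Γ i (MacC F N t (n + 2*(k:ℤ) - 2*l + 1) j)
            - q • (MacC F N t (n + 2*(k:ℤ) - 2*l + 1) i * Γ i (MacC F N t (n + 2*(l:ℤ)) j)))
          + (MacC F N t (n + 2*(l:ℤ)) j * Γ j (MacC F N t (n + 2*(k:ℤ) - 2*l + 1) i)
            - q • (MacC F N t (n + 2*(k:ℤ) - 2*l + 1) j * Γ j (MacC F N t (n + 2*(l:ℤ)) i))))
      = ((1 - q) * t) •
          (((Xv F N i ^ (n + 2*(k:ℤ) + 1 + 1) * Xv F N j ^ n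
              - Xv F N j ^ (n + 2*(k:ℤ) + 1 + 1) * Xv F N i ^ n) /
                (Xv F N i - Xv F N j)) *
            (∏ l ∈ (Finset.univ.erase i).erase j,
              ((t • Xv F N i - Xv F N l) * (t • Xv F N j - Xv F N l)) /
                ((Xv F N i - Xv F N l) * (Xv F N j - Xv F N l)))) := by
  have hx : Xv F N i ≠ 0 := Xv_ne_zero F N i
  have hy : Xv F N j ≠ 0 := Xv_ne_zero F N j
  have hxy : Xv F N i - Xv F N j ≠ 0 := Xv_sub_ne F N i j hij
  have hyx : Xv F N j - Xv F N i ≠ 0 := Xv_sub_ne F N j i hij.symm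
  have hyqx : Xv F N j - q • Xv F N i ≠ 0 := Xv_sub_smul_ne F N q j i hij.symm
  have hxqy : Xv F N i - q • Xv F N j ≠ 0 := Xv_sub_smul_ne F N q i j hij
  have hmemj : j ∈ Finset.univ.erase i := Finset.mem_erase.mpr ⟨hij.symm, Finset.mem_univ j⟩
  have hmemi : i ∈ Finset.univ.erase j := Finset.mem_erase.mpr ⟨hij, Finset.mem_univ i⟩
  have h_ci : ∀ m : ℤ, MacC F N t m i
      = Xv F N i ^ m * ((t • Xv F N i - Xv F N j) / (Xv F N i - Xv F N j)) *
          ∏ l ∈ (Finset.univ.erase i).erase j,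
            (t • Xv F N i - Xv F N l) / (Xv F N i - Xv F N l) := by
    intro m
    rw [MacC, ← Finset.mul_prod_erase _ _ hmemj, ← mul_assoc]
  have h_cj : ∀ m : ℤ, MacC F N t m j
      = Xv F N j ^ m * ((t • Xv F N j - Xv F N i) / (Xv F N j - Xv F N i)) *
          ∏ l ∈ (Finset.univ.erase i).erase j,
            (t • Xv F N j - Xv F N l) / (Xv F N j - Xv F N l) := by
    intro m
    rw [MacC, ← Finset.mul_prod_erase _ _ hmemi, ← mul_assoc, Finset.erase_right_comm]
  have h_gj : ∀ m : ℤ, Γ i (MacC F N t m j)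
      = Xv F N j ^ m * ((t • Xv F N j - q • Xv F N i) / (Xv F N j - q • Xv F N i)) *
          ∏ l ∈ (Finset.univ.erase i).erase j,
            (t • Xv F N j - Xv F N l) / (Xv F N j - Xv F N l) := by
    intro m
    rw [Gamma_coeff_ne hΓ i j hij m, Finset.erase_right_comm]
  have h_gi : ∀ m : ℤ, Γ j (MacC F N t m i)
      = Xv F N i ^ m * ((t • Xv F N i - q • Xv F N j) / (Xv F N i - q • Xv F N j)) *
          ∏ l ∈ (Finset.univ.erase i).erase j,
            (t • Xv F N i - Xv F N l) / (Xv F N i - Xv F N l) := by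
    intro m
    rw [Gamma_coeff_ne hΓ j i hij.symm m]
  -- convert smul to algebraMap
  simp only [Algebra.smul_def] at h_ci h_cj h_gj h_gi hyqx hxqy ⊢
  set K := RatF F N
  set x := Xv F N i
  set y := Xv F N j
  set T := algebraMap F K t with hT
  set Q := algebraMap F K q with hQ
  set P1 := ∏ l ∈ (Finset.univ.erase i).erase j, (T * x - Xv F N l) / (x - Xv F N l) with hP1
  set P2 := ∏ l ∈ (Finset.univ.erase i).erase j, (T * y - Xv F N l) / (y - Xv F N l) with hP2
  have hstep : ∀ l ∈ Finset.range (k+1),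
      ((x ^ (n + 2*(l:ℤ)) * y ^ (n + 2*(k:ℤ) - 2*l + 1)
          - Q * (x ^ (n + 2*(k:ℤ) - 2*l + 1) * y ^ (n + 2*(l:ℤ))))
        * (((T * x - y) / (x - y)) * ((T * y - Q * x) / (y - Q * x)) * (P1 * P2)))
      + ((y ^ (n + 2*(l:ℤ)) * x ^ (n + 2*(k:ℤ) - 2*l + 1)
          - Q * (y ^ (n + 2*(k:ℤ) - 2*l + 1) * x ^ (n + 2*(l:ℤ))))
        * (((T * y - x) / (y - x)) * ((T * x - Q * y) / (x - Q * y)) * (P1 * P2)))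
      = ((MacC F N t (n + 2*(l:ℤ)) i * Γ i (MacC F N t (n + 2*(k:ℤ) - 2*l + 1) j)
            - Q * (MacC F N t (n + 2*(k:ℤ) - 2*l + 1) i * Γ i (MacC F N t (n + 2*(l:ℤ)) j)))
          + (MacC F N t (n + 2*(l:ℤ)) j * Γ j (MacC F N t (n + 2*(k:ℤ) - 2*l + 1) i)
            - Q * (MacC F N t (n + 2*(k:ℤ) - 2*l + 1) j * Γ j (MacC F N t (n + 2*(l:ℤ)) i)))) := by
    intro l _
    rw [h_gj, h_gj, h_gi, h_gi, h_ci, h_ci, h_cj, h_cj]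
    ring
  rw [← Finset.sum_congr rfl hstep, Finset.sum_add_distrib, ← Finset.sum_mul, ← Finset.sum_mul,
    sumPow x y hx hy Q n k, sumPow y x hy hx Q n k]
  have hE2 : ∑ l ∈ Finset.range (k+1), (y^2)^l * (x^2)^(k-l)
      = ∑ l ∈ Finset.range (k+1), (x^2)^l * (y^2)^(k-l) := by
    rw [← reflectE]
    exact Finset.sum_congr rfl fun l _ => mul_comm _ _
  rw [hE2]
  -- rewrite target numerator
  have hxa : x ^ (n + 2*(k:ℤ) + 1 + 1) = x ^ n * (x^2)^(k+1) := by
    rw [show n + 2*(k:ℤ) + 1 + 1 = n + 2*(((k+1 : ℕ)):ℤ) by push_cast; ring, zpow_split x hx]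
  have hya : y ^ (n + 2*(k:ℤ) + 1 + 1) = y ^ n * (y^2)^(k+1) := by
    rw [show n + 2*(k:ℤ) + 1 + 1 = n + 2*(((k+1 : ℕ)):ℤ) by push_cast; ring, zpow_split y hy]
  have hgeom : (x^2)^(k+1) - (y^2)^(k+1)
      = (∑ l ∈ Finset.range (k+1), (x^2)^l * (y^2)^(k-l)) * (x^2 - y^2) := by
    rw [← geom_sum₂_mul (x^2) (y^2) (k+1)]
    simp only [Nat.add_sub_cancel]
  have hB : (∏ l ∈ (Finset.univ.erase i).erase j,
        ((T * x - Xv F N l) * (T * y - Xv F N l)) /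
          ((x - Xv F N l) * (y - Xv F N l))) = P1 * P2 := by
    rw [hP1, hP2, ← Finset.prod_mul_distrib]
    exact Finset.prod_congr rfl fun l _ => (div_mul_div_comm _ _ _ _).symm
  have hnum : x^n * (x^2)^(k+1) * y^n - y^n * (y^2)^(k+1) * x^n
      = x^n * y^n * ((∑ l ∈ Finset.range (k+1), (x^2)^l * (y^2)^(k-l)) * (x^2 - y^2)) := by
    rw [← hgeom]; ring
  rw [map_mul, map_sub, map_one, hB, hxa, hya, hnum, ← hQ, ← hT]
  have hxqy' : x - y * Q ≠ 0 := by rwa [mul_comm]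
  have hyqx' : y - x * Q ≠ 0 := by rwa [mul_comm]
  field_simp
  ring

lemma diag_zero
    (hΓ : ∀ i j : Fin N, Γ i (Xv F N j) = if j = i then q • Xv F N j else Xv F N j)
    (hq : q ≠ 0) (n : ℤ) (k : ℕ) (i : Fin N) :
    ∑ l ∈ Finset.range (k+1),
        (MacC F N t (n + 2*(l:ℤ)) i * Γ i (MacC F N t (n + 2*(k:ℤ) - 2*l + 1) i)
          - q • (MacC F N t (n + 2*(k:ℤ) - 2*l + 1) i * Γ i (MacC F N t (n + 2*(l:ℤ)) i))) = 0 := by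
  have hx : Xv F N i ≠ 0 := Xv_ne_zero F N i
  set G := Γ i (∏ l ∈ Finset.univ.erase i,
      (t • Xv F N i - Xv F N l) / (Xv F N i - Xv F N l)) with hG
  set A := ∏ l ∈ Finset.univ.erase i,
      (t • Xv F N i - Xv F N l) / (Xv F N i - Xv F N l) with hA
  have key : ∀ l ∈ Finset.range (k+1),
      MacC F N t (n + 2*(l:ℤ)) i * Γ i (MacC F N t (n + 2*(k:ℤ) - 2*l + 1) i)
          - q • (MacC F N t (n + 2*(k:ℤ) - 2*l + 1) i * Γ i (MacC F N t (n + 2*(l:ℤ)) i))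
        = (q ^ (n + 2*(k:ℤ) - 2*l + 1) - q ^ (n + 2*(l:ℤ) + 1)) •
            (Xv F N i ^ (2*n + 2*(k:ℤ) + 1) * (A * G)) := by
    intro l _
    rw [Gamma_coeff_eq hΓ, Gamma_coeff_eq hΓ]
    simp only [MacC]
    simp only [← hA, ← hG]
    have hxs : Xv F N i ^ (2*n + 2*(k:ℤ) + 1)
        = Xv F N i ^ (n + 2*(l:ℤ)) * Xv F N i ^ (n + 2*(k:ℤ) - 2*l + 1) := by
      rw [← zpow_add₀ hx]
      congr 1
      ring
    have hq2 : q ^ (n + 2*(l:ℤ) + 1) = q * q ^ (n + 2*(l:ℤ)) := by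
      rw [zpow_add₀ hq, zpow_one]
      ring
    rw [hxs, hq2]
    simp only [Algebra.smul_def, map_sub, map_mul, map_zpow₀]
    ring
  rw [Finset.sum_congr rfl key, ← Finset.sum_smul, qsum, zero_smul]

lemma sum_pairs {M : Type*} [AddCommMonoid M] (N : ℕ) (H : Fin N → Fin N → M) :
    ∑ i : Fin N, ∑ j ∈ Finset.univ.erase i, H i j
      = ∑ i : Fin N, ∑ j ∈ Finset.univ.filter (fun j => i < j), (H i j + H j i) := by
  have split : ∀ i : Fin N, ∑ j ∈ Finset.univ.erase i, H i j
      = (∑ j ∈ Finset.univ.filter (fun j => i < j), H i j)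
        + ∑ j ∈ Finset.univ.filter (fun j => j < i), H i j := by
    intro i
    rw [← Finset.sum_union]
    · apply Finset.sum_congr _ (fun _ _ => rfl)
      ext j
      simp only [Finset.mem_erase, Finset.mem_union, Finset.mem_filter, Finset.mem_univ,
        and_true, true_and]
      constructor
      · intro h; exact lt_or_gt_of_ne (Ne.symm h)
      · rintro (h | h)
        · exact ne_of_gt h
        · exact ne_of_lt h
    · rw [Finset.disjoint_filter]
      intro j _ h1 h2
      exact absurd (h1.trans h2) (lt_irrefl i)
  simp only [split, Finset.sum_add_distrib]
  congr 1
  exact Finset.sum_comm' (fun x y => by simp [and_comm])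

lemma Gamma_comm (F : Type) [Field F] (N : ℕ) (q : F)
    (Γ : Fin N → (RatF F N ≃ₐ[F] RatF F N))
    (hΓ : ∀ i j : Fin N, Γ i (Xv F N j) = if j = i then q • Xv F N j else Xv F N j)
    (i j : Fin N) (f : RatF F N) : Γ i (Γ j f) = Γ j (Γ i f) := by
  rcases eq_or_ne i j with rfl | hij
  · rfl
  have key : ((Γ i).toAlgHom.toRingHom.comp (Γ j).toAlgHom.toRingHom)
      = ((Γ j).toAlgHom.toRingHom.comp (Γ i).toAlgHom.toRingHom) := by
    apply IsLocalization.ringHom_ext (nonZeroDivisors (MvPolynomial (Fin N) F))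
    apply MvPolynomial.ringHom_ext
    · intro a
      simp only [RingHom.comp_apply]
      rw [← MvPolynomial.algebraMap_eq,
        ← IsScalarTower.algebraMap_apply F (MvPolynomial (Fin N) F) (RatF F N)]
      simp
    · intro l
      simp only [RingHom.comp_apply]
      show Γ i (Γ j (Xv F N l)) = Γ j (Γ i (Xv F N l))
      by_cases hli : l = i
      · have hlj : l ≠ j := by rw [hli]; exact hij
        rw [hΓ j l, if_neg hlj, hΓ i l, if_pos hli, Gamma_smul, hΓ j l, if_neg hlj]
      · by_cases hlj : l = j
        · rw [hΓ j l, if_pos hlj, Gamma_smul, hΓ i l, if_neg hli]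
          rw [hΓ j l, if_pos hlj]
        · rw [hΓ j l, if_neg hlj, hΓ i l, if_neg hli]
          rw [hΓ j l, if_neg hlj]
  exact DFunLike.congr_fun key f


set_option maxHeartbeats 1600000 in
/-- `(1−q)·t·𝓜_{n+2k+1,n} = Σ_{ℓ=0}^k [𝓜_{n+2ℓ}, 𝓜_{n+2k−2ℓ+1}]_q`,
where `[X,Y]_q = X∘Y − q·Y∘X`. -/
theorem statement10 (F : Type) [Field F] [CharZero F] (q t : F) (hq : q ≠ 0) (ht : t ≠ 0)
    (N : ℕ) (hN : 1 ≤ N)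
    (Γ : Fin N → (RatF F N ≃ₐ[F] RatF F N))
    (hΓ : ∀ i j : Fin N, Γ i (Xv F N j) = if j = i then q • Xv F N j else Xv F N j)
    (n : ℤ) (k : ℕ) (f : RatF F N) :
    ((1 - q) * t) • MacPair F N t Γ (n + 2 * k + 1) n f
      = ∑ l ∈ Finset.range (k + 1),
          (Mac F N t Γ (n + 2 * l) (Mac F N t Γ (n + 2 * k - 2 * l + 1) f)
            - q • Mac F N t Γ (n + 2 * k - 2 * l + 1) (Mac F N t Γ (n + 2 * l) f)) := by
  classical
  have hMac : ∀ (m : ℤ) (g : RatF F N), Mac F N t Γ m g = ∑ i, MacC F N t m i * Γ i g := by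
    intro m g
    rfl
  have expand : ∀ m mm : ℤ, Mac F N t Γ m (Mac F N t Γ mm f)
      = ∑ i, ∑ j, (MacC F N t m i * Γ i (MacC F N t mm j)) * Γ i (Γ j f) := by
    intro m mm
    rw [hMac m, hMac mm]
    refine Finset.sum_congr rfl fun i _ => ?_
    rw [map_sum, Finset.mul_sum]
    refine Finset.sum_congr rfl fun j _ => ?_
    rw [map_mul, ← mul_assoc]
  have step1 : ∀ l : ℕ,
      Mac F N t Γ (n + 2*(l:ℤ)) (Mac F N t Γ (n + 2*(k:ℤ) - 2*l + 1) f)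
        - q • Mac F N t Γ (n + 2*(k:ℤ) - 2*l + 1) (Mac F N t Γ (n + 2*(l:ℤ)) f)
      = ∑ i, ∑ j, (MacC F N t (n + 2*(l:ℤ)) i * Γ i (MacC F N t (n + 2*(k:ℤ) - 2*l + 1) j)
          - q • (MacC F N t (n + 2*(k:ℤ) - 2*l + 1) i * Γ i (MacC F N t (n + 2*(l:ℤ)) j)))
            * Γ i (Γ j f) := by
    intro l
    rw [expand, expand, Finset.smul_sum, ← Finset.sum_sub_distrib]
    refine Finset.sum_congr rfl fun i _ => ?_
    rw [Finset.smul_sum, ← Finset.sum_sub_distrib]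
    refine Finset.sum_congr rfl fun j _ => ?_
    rw [sub_mul, smul_mul_assoc]
  rw [Finset.sum_congr rfl fun l _ => step1 l]
  have swap : (∑ l ∈ Finset.range (k+1), ∑ i : Fin N, ∑ j : Fin N,
        (MacC F N t (n + 2*(l:ℤ)) i * Γ i (MacC F N t (n + 2*(k:ℤ) - 2*l + 1) j)
          - q • (MacC F N t (n + 2*(k:ℤ) - 2*l + 1) i * Γ i (MacC F N t (n + 2*(l:ℤ)) j)))
            * Γ i (Γ j f))
      = ∑ i : Fin N, ∑ j : Fin N, ∑ l ∈ Finset.range (k+1),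
        (MacC F N t (n + 2*(l:ℤ)) i * Γ i (MacC F N t (n + 2*(k:ℤ) - 2*l + 1) j)
          - q • (MacC F N t (n + 2*(k:ℤ) - 2*l + 1) i * Γ i (MacC F N t (n + 2*(l:ℤ)) j)))
            * Γ i (Γ j f) := by
    rw [Finset.sum_comm]
    exact Finset.sum_congr rfl fun i _ => Finset.sum_comm
  rw [swap]
  have pull : ∀ i j : Fin N, (∑ l ∈ Finset.range (k+1),
        (MacC F N t (n + 2*(l:ℤ)) i * Γ i (MacC F N t (n + 2*(k:ℤ) - 2*l + 1) j)
          - q • (MacC F N t (n + 2*(k:ℤ) - 2*l + 1) i * Γ i (MacC F N t (n + 2*(l:ℤ)) j)))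
            * Γ i (Γ j f))
      = (∑ l ∈ Finset.range (k+1),
          (MacC F N t (n + 2*(l:ℤ)) i * Γ i (MacC F N t (n + 2*(k:ℤ) - 2*l + 1) j)
          - q • (MacC F N t (n + 2*(k:ℤ) - 2*l + 1) i * Γ i (MacC F N t (n + 2*(l:ℤ)) j))))
            * Γ i (Γ j f) := by
    intro i j
    rw [Finset.sum_mul]
  rw [Finset.sum_congr rfl fun i _ => Finset.sum_congr rfl fun j _ => pull i j]
  -- remove diagonal
  have hdiagterm : ∀ i : Fin N,
      (∑ l ∈ Finset.range (k+1),
          (MacC F N t (n + 2*(l:ℤ)) i * Γ i (MacC F N t (n + 2*(k:ℤ) - 2*l + 1) i)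
          - q • (MacC F N t (n + 2*(k:ℤ) - 2*l + 1) i * Γ i (MacC F N t (n + 2*(l:ℤ)) i))))
            * Γ i (Γ i f) = 0 := by
    intro i
    rw [diag_zero hΓ hq n k i, zero_mul]
  have drop : ∀ i : Fin N, (∑ j : Fin N,
      (∑ l ∈ Finset.range (k+1),
          (MacC F N t (n + 2*(l:ℤ)) i * Γ i (MacC F N t (n + 2*(k:ℤ) - 2*l + 1) j)
          - q • (MacC F N t (n + 2*(k:ℤ) - 2*l + 1) i * Γ i (MacC F N t (n + 2*(l:ℤ)) j))))
            * Γ i (Γ j f))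
      = ∑ j ∈ Finset.univ.erase i,
      (∑ l ∈ Finset.range (k+1),
          (MacC F N t (n + 2*(l:ℤ)) i * Γ i (MacC F N t (n + 2*(k:ℤ) - 2*l + 1) j)
          - q • (MacC F N t (n + 2*(k:ℤ) - 2*l + 1) i * Γ i (MacC F N t (n + 2*(l:ℤ)) j))))
            * Γ i (Γ j f) := by
    intro i
    exact (Finset.sum_erase (f := fun j => (∑ l ∈ Finset.range (k+1),
          (MacC F N t (n + 2*(l:ℤ)) i * Γ i (MacC F N t (n + 2*(k:ℤ) - 2*l + 1) j)
          - q • (MacC F N t (n + 2*(k:ℤ) - 2*l + 1) i * Γ i (MacC F N t (n + 2*(l:ℤ)) j))))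
            * Γ i (Γ j f)) (a := i) Finset.univ (hdiagterm i)).symm
  rw [Finset.sum_congr rfl fun i _ => drop i]
  rw [sum_pairs]
  refine Eq.symm ?_
  rw [MacPair, Finset.smul_sum]
  refine Finset.sum_congr rfl fun i _ => ?_
  rw [Finset.smul_sum]
  refine Finset.sum_congr rfl fun j hj => ?_
  have hij : i ≠ j := ne_of_lt (Finset.mem_filter.mp hj).2
  rw [Gamma_comm F N q Γ hΓ j i f, ← add_mul, ← Finset.sum_add_distrib,
    pair_core hΓ n k i j hij, smul_mul_assoc]
end
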